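/- arXiv:1707.07645 — 2 statements merged into one kernel-verified Lean document; each statement's English description precedes it below -/
import Mathlib

section
/- Let u : ℝ² → ℝ be a C³ solution of u_yy = (u_y + y)·u_xx − u_x·u_xy − 2. Then the function v(x,y) := −2x + y·u_x(x,y) satisfies the linearized equation v_yy = (u_y + y)·v_xx + u_xx·v_y − u_x·v_xy − u_xy·v_x at every point of ℝ². -/
/-- Partial derivative of `f : ℝ² → ℝ` in the direction `v`. -/
noncomputable def pd2 (v : ℝ × ℝ) (f : ℝ × ℝ → ℝ) : ℝ × ℝ → ℝ :=
  fun p => fderiv ℝ f p v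

noncomputable def dx : (ℝ × ℝ → ℝ) → ℝ × ℝ → ℝ := pd2 (1, 0)
noncomputable def dy : (ℝ × ℝ → ℝ) → ℝ × ℝ → ℝ := pd2 (0, 1)

/-- Smoothness of first-order partial derivatives. -/
lemma pd2_contDiff {n : ℕ∞} {f : ℝ × ℝ → ℝ} (hf : ContDiff ℝ (n + 1) f) (v : ℝ × ℝ) :
    ContDiff ℝ n (pd2 v f) :=
  (hf.fderiv_right le_rfl).clm_apply contDiff_const

/-- Second `pd2` derivatives as the bilinear second derivative. -/
lemma pd2_pd2 {f : ℝ × ℝ → ℝ} (hf : ContDiff ℝ 2 f) (v w p : ℝ × ℝ) :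
    pd2 w (pd2 v f) p = fderiv ℝ (fderiv ℝ f) p w v := by
  have hdf : Differentiable ℝ (fderiv ℝ f) :=
    (hf.fderiv_right (m := 1) (by norm_num)).differentiable (by norm_num)
  show fderiv ℝ (fun q => (fderiv ℝ f q) v) p w = _
  rw [fderiv_clm_apply (hdf p) (differentiableAt_const v)]
  simp

/-- Clairaut / Schwarz symmetry of second partial derivatives. -/
lemma pd2_comm {f : ℝ × ℝ → ℝ} (hf : ContDiff ℝ 2 f) (v w : ℝ × ℝ) :
    pd2 w (pd2 v f) = pd2 v (pd2 w f) := by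
  funext p
  rw [pd2_pd2 hf, pd2_pd2 hf]
  exact (hf.contDiffAt.isSymmSndFDerivAt (by norm_num)) w v

lemma pd2_add {f g : ℝ × ℝ → ℝ} {p : ℝ × ℝ} (v : ℝ × ℝ)
    (hf : DifferentiableAt ℝ f p) (hg : DifferentiableAt ℝ g p) :
    pd2 v (fun q => f q + g q) p = pd2 v f p + pd2 v g p := by
  unfold pd2; rw [fderiv_fun_add hf hg]; simp

lemma pd2_mul {f g : ℝ × ℝ → ℝ} {p : ℝ × ℝ} (v : ℝ × ℝ)
    (hf : DifferentiableAt ℝ f p) (hg : DifferentiableAt ℝ g p) :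
    pd2 v (fun q => f q * g q) p = f p * pd2 v g p + pd2 v f p * g p := by
  unfold pd2; rw [fderiv_fun_mul hf hg]; simp [mul_comm]

lemma pd2_fst (v p : ℝ × ℝ) : pd2 v (fun q => q.1) p = v.1 := by
  unfold pd2
  rw [show (fun q : ℝ × ℝ => q.1) = Prod.fst from rfl, fderiv_fst]
  rfl

lemma pd2_snd (v p : ℝ × ℝ) : pd2 v (fun q => q.2) p = v.2 := by
  unfold pd2
  rw [show (fun q : ℝ × ℝ => q.2) = Prod.snd from rfl, fderiv_snd]
  rfl

lemma pd2_const (v p : ℝ × ℝ) (c : ℝ) : pd2 v (fun _ => c) p = 0 := by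
  unfold pd2; rw [fderiv_fun_const]; rfl

theorem phi_m1_is_symmetry (u : ℝ × ℝ → ℝ) (hu : ContDiff ℝ 3 u)
    (heq : ∀ p : ℝ × ℝ,
      dy (dy u) p = (dy u p + p.2) * dx (dx u) p - dx u p * dx (dy u) p - 2) :
    ∀ p : ℝ × ℝ,
      (fun v : ℝ × ℝ → ℝ =>
        dy (dy v) p = (dy u p + p.2) * dx (dx v) p + dx (dx u) p * dy v p
          - dx u p * dx (dy v) p - dx (dy u) p * dx v p)
      (fun q => -2 * q.1 + q.2 * dx u q) := by
  have hu2 : ContDiff ℝ 2 u := hu.of_le (by norm_num)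
  have hu3 : ContDiff ℝ ((2 : ℕ∞) + 1) u := by norm_num; exact hu
  -- smoothness of derivatives
  have hA : ContDiff ℝ 2 (dx u) := pd2_contDiff hu3 _
  have hAy : ContDiff ℝ 2 (dy u) := pd2_contDiff hu3 _
  have hA1 : ContDiff ℝ ((1 : ℕ∞) + 1) (dx u) := by norm_num; exact hA
  have hAy1 : ContDiff ℝ ((1 : ℕ∞) + 1) (dy u) := by norm_num; exact hAy
  have hB : ContDiff ℝ 1 (dx (dx u)) := pd2_contDiff hA1 _
  have hC : ContDiff ℝ 1 (dy (dx u)) := pd2_contDiff hA1 _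
  have hD : ContDiff ℝ 1 (dx (dy u)) := pd2_contDiff hAy1 _
  have hE : ContDiff ℝ 1 (dy (dy u)) := pd2_contDiff hAy1 _
  -- Clairaut
  have hsw : dy (dx u) = dx (dy u) := pd2_comm hu2 _ _
  have hsw2 : dy (dy (dx u)) = dx (dy (dy u)) := by
    rw [hsw]; exact pd2_comm (hAy.of_le (by norm_num)) _ _
  have hsw3 : dx (dy (dx u)) = dx (dx (dy u)) := by rw [hsw]
  intro p
  set V : ℝ × ℝ → ℝ := fun q => -2 * q.1 + q.2 * dx u q with hV
  -- first derivatives of V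
  have hdiff1 : ∀ q : ℝ × ℝ, DifferentiableAt ℝ (fun q : ℝ × ℝ => -2 * q.1) q := by
    intro q; exact (differentiableAt_fst.const_mul _)
  have hdiff2 : ∀ q : ℝ × ℝ, DifferentiableAt ℝ (fun q : ℝ × ℝ => q.2 * dx u q) q := by
    intro q
    exact differentiableAt_snd.mul ((hA.differentiable (by norm_num)) q)
  have hfirst : ∀ v : ℝ × ℝ, ∀ q : ℝ × ℝ,
      pd2 v V q = -2 * v.1 + (v.2 * dx u q + q.2 * pd2 v (dx u) q) := by
    intro v q
    have h1 : pd2 v (fun q : ℝ × ℝ => -2 * q.1) q = -2 * v.1 := by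
      have := pd2_mul (f := fun _ : ℝ × ℝ => (-2 : ℝ)) (g := fun q : ℝ × ℝ => q.1) (p := q) v
        (differentiableAt_const _) differentiableAt_fst
      rw [this, pd2_fst, pd2_const]; ring
    have h2 : pd2 v (fun q : ℝ × ℝ => q.2 * dx u q) q
        = q.2 * pd2 v (dx u) q + v.2 * dx u q := by
      have := pd2_mul (f := fun q : ℝ × ℝ => q.2) (g := dx u) (p := q) v
        differentiableAt_snd ((hA.differentiable (by norm_num)) q)
      rw [this, pd2_snd]
    rw [show pd2 v V q = pd2 v (fun q => (fun q : ℝ × ℝ => -2 * q.1) q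
        + (fun q : ℝ × ℝ => q.2 * dx u q) q) q from rfl,
      pd2_add v (hdiff1 q) (hdiff2 q), h1, h2]
    ring
  have hdxV : dx V = fun q => -2 + q.2 * dx (dx u) q := by
    funext q; rw [show dx V q = pd2 (1,0) V q from rfl, hfirst]; simp [dx]
  have hdyV : dy V = fun q => dx u q + q.2 * dy (dx u) q := by
    funext q; rw [show dy V q = pd2 (0,1) V q from rfl, hfirst]; simp [dy]
  -- second derivatives of V
  have hsecond : ∀ v : ℝ × ℝ,
      pd2 v (dx V) p = v.2 * dx (dx u) p + p.2 * pd2 v (dx (dx u)) p := by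
    intro v
    rw [hdxV]
    have hg : DifferentiableAt ℝ (fun q : ℝ × ℝ => q.2 * dx (dx u) q) p :=
      differentiableAt_snd.mul ((hB.differentiable (by norm_num)) p)
    rw [show pd2 v (fun q => -2 + q.2 * dx (dx u) q) p
        = pd2 v (fun q => (fun _ : ℝ × ℝ => (-2:ℝ)) q
          + (fun q : ℝ × ℝ => q.2 * dx (dx u) q) q) p from rfl,
      pd2_add v (differentiableAt_const _) hg, pd2_const,
      pd2_mul v differentiableAt_snd ((hB.differentiable (by norm_num)) p), pd2_snd]
    ring
  have hsecondy : ∀ v : ℝ × ℝ,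
      pd2 v (dy V) p = pd2 v (dx u) p + (v.2 * dy (dx u) p + p.2 * pd2 v (dy (dx u)) p) := by
    intro v
    rw [hdyV]
    have hg : DifferentiableAt ℝ (fun q : ℝ × ℝ => q.2 * dy (dx u) q) p :=
      differentiableAt_snd.mul ((hC.differentiable (by norm_num)) p)
    rw [show pd2 v (fun q => dx u q + q.2 * dy (dx u) q) p
        = pd2 v (fun q => dx u q + (fun q : ℝ × ℝ => q.2 * dy (dx u) q) q) p from rfl,
      pd2_add v ((hA.differentiable (by norm_num)) p) hg,
      pd2_mul v differentiableAt_snd ((hC.differentiable (by norm_num)) p), pd2_snd]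
    ring
  have hdxdxV : dx (dx V) p = p.2 * dx (dx (dx u)) p := by
    rw [show dx (dx V) p = pd2 (1,0) (dx V) p from rfl, hsecond]
    simp [dx]
  have hdxdyV : dx (dy V) p = dx (dx u) p + p.2 * dx (dx (dy u)) p := by
    rw [show dx (dy V) p = pd2 (1,0) (dy V) p from rfl, hsecondy, ← hsw3]
    simp [dx]
  have hdydyV : dy (dy V) p
      = 2 * dy (dx u) p + p.2 * dx (dy (dy u)) p := by
    rw [show dy (dy V) p = pd2 (0,1) (dy V) p from rfl, hsecondy, ← hsw2]
    show dy (dx u) p + (1 * dy (dx u) p + p.2 * dy (dy (dx u)) p) = _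
    ring
  -- differentiate the equation in x
  have heqfun : dy (dy u)
      = fun q => (dy u q + q.2) * dx (dx u) q - dx u q * dx (dy u) q - 2 := funext heq
  have hdxeq : dx (dy (dy u)) p
      = (dx (dy u) p + 0) * dx (dx u) p + (dy u p + p.2) * dx (dx (dx u)) p
        - (dx u p * dx (dx (dy u)) p + dx (dx u) p * dx (dy u) p) := by
    rw [heqfun]
    have d1 : DifferentiableAt ℝ (fun q : ℝ × ℝ => dy u q + q.2) p :=
      ((hAy.differentiable (by norm_num)) p).add differentiableAt_snd
    have d2 : DifferentiableAt ℝ (dx (dx u)) p := (hB.differentiable (by norm_num)) p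
    have d3 : DifferentiableAt ℝ (dx u) p := (hA.differentiable (by norm_num)) p
    have d4 : DifferentiableAt ℝ (dx (dy u)) p := (hD.differentiable (by norm_num)) p
    have e1 : dx (fun q => (dy u q + q.2) * dx (dx u) q) p
        = (dy u p + p.2) * dx (dx (dx u)) p + (dx (dy u) p + 0) * dx (dx u) p := by
      rw [show dx (fun q => (dy u q + q.2) * dx (dx u) q) p
          = pd2 (1,0) (fun q => (fun q : ℝ × ℝ => dy u q + q.2) q * dx (dx u) q) p from rfl,
        pd2_mul _ d1 d2,
        pd2_add _ ((hAy.differentiable (by norm_num)) p) differentiableAt_snd, pd2_snd]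
      rfl
    have e2 : dx (fun q => dx u q * dx (dy u) q) p
        = dx u p * dx (dx (dy u)) p + dx (dx u) p * dx (dy u) p := by
      rw [show dx (fun q => dx u q * dx (dy u) q) p
          = pd2 (1,0) (fun q => dx u q * dx (dy u) q) p from rfl, pd2_mul _ d3 d4]
      rfl
    have hs1 : DifferentiableAt ℝ (fun q : ℝ × ℝ => (dy u q + q.2) * dx (dx u) q) p :=
      d1.mul d2
    have hs2 : DifferentiableAt ℝ (fun q : ℝ × ℝ => dx u q * dx (dy u) q) p := d3.mul d4
    calc dx (fun q => (dy u q + q.2) * dx (dx u) q - dx u q * dx (dy u) q - 2) p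
        = pd2 (1,0) (fun q => ((fun q : ℝ × ℝ => (dy u q + q.2) * dx (dx u) q) q
            + (fun q : ℝ × ℝ => -(dx u q * dx (dy u) q)) q)
            + (fun _ : ℝ × ℝ => (-2:ℝ)) q) p := by
          congr 1
      _ = _ := by
          rw [pd2_add _ (hs1.fun_add hs2.fun_neg) (differentiableAt_const _),
            pd2_add _ hs1 hs2.fun_neg, pd2_const]
          have : pd2 (1,0) (fun q : ℝ × ℝ => -(dx u q * dx (dy u) q)) p
              = -pd2 (1,0) (fun q : ℝ × ℝ => dx u q * dx (dy u) q) p := by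
            unfold pd2
            rw [show (fun q : ℝ × ℝ => -(dx u q * dx (dy u) q))
              = fun q => -((fun q : ℝ × ℝ => dx u q * dx (dy u) q) q) from rfl, fderiv_fun_neg]
            simp
          rw [this, show pd2 (1,0) (fun q : ℝ × ℝ => dx u q * dx (dy u) q) p
              = dx (fun q => dx u q * dx (dy u) q) p from rfl, e2,
            show pd2 (1,0) (fun q : ℝ × ℝ => (dy u q + q.2) * dx (dx u) q) p
              = dx (fun q => (dy u q + q.2) * dx (dx u) q) p from rfl, e1]
          ring
  -- assemble
  have hfx : dx V p = -2 + p.2 * dx (dx u) p := by rw [hdxV]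
  have hfy : dy V p = dx u p + p.2 * dx (dy u) p := by rw [hdyV, ← hsw]
  rw [hdydyV, hdxdxV, hdxdyV, hfx, hfy, hdxeq, hsw]
  ring
end

section
/- Let U ⊆ ℝ² be open, and let u, ψ : U → ℝ be C² functions such that the expression Δ := ψ² − u_x·ψ − (u_y + y) is nonzero at every point of U and such that ψ_x = −1/Δ and ψ_y = (u_x − ψ)/Δ hold on all of U. Then u satisfies u_yy = (u_y + y)·u_xx − u_x·u_xy − 2 at every point of U. -/
lemma pd2_diffAt {f : ℝ × ℝ → ℝ} {p : ℝ × ℝ} (hf : ContDiffAt ℝ 2 f p) (v : ℝ × ℝ) :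
    DifferentiableAt ℝ (pd2 v f) p := by
  have h1 : ContDiffAt ℝ 1 (fderiv ℝ f) p := hf.fderiv_right (by norm_num)
  exact (h1.differentiableAt one_ne_zero).clm_apply (differentiableAt_const v)

lemma pd2_symm {f : ℝ × ℝ → ℝ} {p : ℝ × ℝ} (hf : ContDiffAt ℝ 2 f p) (v w : ℝ × ℝ) :
    pd2 w (pd2 v f) p = pd2 v (pd2 w f) p := by
  have hd : DifferentiableAt ℝ (fderiv ℝ f) p :=
    (hf.fderiv_right (by norm_num : (1:WithTop ℕ∞) + 1 ≤ 2)).differentiableAt one_ne_zero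
  have hsym : IsSymmSndFDerivAt ℝ f p := hf.isSymmSndFDerivAt (by simp)
  show fderiv ℝ (fun q => fderiv ℝ f q v) p w = fderiv ℝ (fun q => fderiv ℝ f q w) p v
  rw [fderiv_clm_apply hd (differentiableAt_const v),
      fderiv_clm_apply hd (differentiableAt_const w)]
  simp [hsym w v]

theorem covering_implies_eq2 (U : Set (ℝ × ℝ)) (hU : IsOpen U)
    (u ψ : ℝ × ℝ → ℝ) (hu : ContDiffOn ℝ 2 u U) (hψ : ContDiffOn ℝ 2 ψ U)
    (hΔ : ∀ p ∈ U, ψ p ^ 2 - dx u p * ψ p - (dy u p + p.2) ≠ 0)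
    (hx : ∀ p ∈ U, dx ψ p = -1 / (ψ p ^ 2 - dx u p * ψ p - (dy u p + p.2)))
    (hy : ∀ p ∈ U,
      dy ψ p = (dx u p - ψ p) / (ψ p ^ 2 - dx u p * ψ p - (dy u p + p.2))) :
    ∀ p ∈ U,
      dy (dy u) p = (dy u p + p.2) * dx (dx u) p - dx u p * dx (dy u) p - 2 := by
  intro p hp
  have hpU : U ∈ nhds p := hU.mem_nhds hp
  have hu2 : ContDiffAt ℝ 2 u p := hu.contDiffAt hpU
  have hψ2 : ContDiffAt ℝ 2 ψ p := hψ.contDiffAt hpU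
  -- the Δ function, written with `*` instead of `^2`
  set Δf : ℝ × ℝ → ℝ := fun q => ψ q * ψ q - dx u q * ψ q - (dy u q + q.2) with hΔf
  have hΔeq : ∀ q, Δf q = ψ q ^ 2 - dx u q * ψ q - (dy u q + q.2) := by
    intro q; simp [hΔf]; ring
  -- derivatives of the building blocks
  have hψd : DifferentiableAt ℝ ψ p := hψ2.differentiableAt (by norm_num)
  set Lψ := fderiv ℝ ψ p with hLψ
  have hψ' : HasFDerivAt ψ Lψ p := hψd.hasFDerivAt
  set Lux := fderiv ℝ (dx u) p with hLux
  have hux' : HasFDerivAt (dx u) Lux p := (pd2_diffAt hu2 (1, 0)).hasFDerivAt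
  set Luy := fderiv ℝ (dy u) p with hLuy
  have huy' : HasFDerivAt (dy u) Luy p := (pd2_diffAt hu2 (0, 1)).hasFDerivAt
  have hsnd : HasFDerivAt (fun q : ℝ × ℝ => q.2) (ContinuousLinearMap.snd ℝ ℝ ℝ) p :=
    hasFDerivAt_snd
  have hΔ' : HasFDerivAt Δf
      ((ψ p • Lψ + ψ p • Lψ) - (dx u p • Lψ + ψ p • Lux) -
        (Luy + ContinuousLinearMap.snd ℝ ℝ ℝ)) p :=
    ((hψ'.mul hψ').sub (hux'.mul hψ')).sub (huy'.add hsnd)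
  set LΔ := (ψ p • Lψ + ψ p • Lψ) - (dx u p • Lψ + ψ p • Lux) -
      (Luy + ContinuousLinearMap.snd ℝ ℝ ℝ) with hLΔ
  set L1 := fderiv ℝ (dx ψ) p with hL1
  have hdxψ' : HasFDerivAt (dx ψ) L1 p := (pd2_diffAt hψ2 (1, 0)).hasFDerivAt
  set L2 := fderiv ℝ (dy ψ) p with hL2
  have hdyψ' : HasFDerivAt (dy ψ) L2 p := (pd2_diffAt hψ2 (0, 1)).hasFDerivAt
  -- first identity: dx ψ * Δ = -1 near p, so its derivative vanishes
  have hev1 : (fun q => dx ψ q * Δf q) =ᶠ[nhds p] (fun _ => (-1 : ℝ)) := by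
    filter_upwards [hpU] with q hq
    have h1 := hx q hq
    have h2 := hΔ q hq
    rw [hΔeq q, h1]
    rw [div_mul_cancel₀ _ h2]
  have he1 : dx ψ p • LΔ + Δf p • L1 = 0 := by
    have := (hdxψ'.mul hΔ').fderiv
    rw [show dx ψ * Δf = fun q => dx ψ q * Δf q from rfl, hev1.fderiv_eq, fderiv_fun_const] at this
    simpa [add_comm] using this.symm
  -- second identity: dy ψ * Δ - (dx u - ψ) = 0 near p
  have hev2 : (fun q => dy ψ q * Δf q - (dx u q - ψ q)) =ᶠ[nhds p] (fun _ => (0 : ℝ)) := by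
    filter_upwards [hpU] with q hq
    have h1 := hy q hq
    have h2 := hΔ q hq
    rw [hΔeq q, h1]
    rw [div_mul_cancel₀ _ h2, sub_self]
  have he2 : dy ψ p • LΔ + Δf p • L2 - (Lux - Lψ) = 0 := by
    have := ((hdyψ'.mul hΔ').sub (hux'.sub hψ')).fderiv
    rw [show dy ψ * Δf - (dx u - ψ) = fun q => dy ψ q * Δf q - (dx u q - ψ q) from rfl,
      hev2.fderiv_eq, fderiv_fun_const] at this
    simpa [add_comm] using this.symm
  -- evaluate at the basis vectors
  have E1 : dx ψ p * (LΔ (0, 1)) + Δf p * (L1 (0, 1)) = 0 := by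
    have := congrArg (fun L : ℝ × ℝ →L[ℝ] ℝ => L (0, 1)) he1
    simpa using this
  have E2 : dy ψ p * (LΔ (1, 0)) + Δf p * (L2 (1, 0)) - (Lux (1, 0) - Lψ (1, 0)) = 0 := by
    have := congrArg (fun L : ℝ × ℝ →L[ℝ] ℝ => L (1, 0)) he2
    simpa using this
  -- identifications of the entries with pd2 quantities
  have hψy : Lψ (0, 1) = dy ψ p := rfl
  have hψx : Lψ (1, 0) = dx ψ p := rfl
  have huxy : Lux (0, 1) = dy (dx u) p := rfl
  have huxx : Lux (1, 0) = dx (dx u) p := rfl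
  have huyy : Luy (0, 1) = dy (dy u) p := rfl
  have huyx : Luy (1, 0) = dx (dy u) p := rfl
  have hmix : L1 (0, 1) = L2 (1, 0) := pd2_symm hψ2 (1, 0) (0, 1)
  have humix : dy (dx u) p = dx (dy u) p := pd2_symm hu2 (1, 0) (0, 1)
  -- expand LΔ applied to the basis vectors
  have hLΔy : LΔ (0, 1) =
      (ψ p * dy ψ p + ψ p * dy ψ p) - (dx u p * dy ψ p + ψ p * dy (dx u) p) -
        (dy (dy u) p + 1) := by
    simp [hLΔ, hψy, huxy, huyy]
  have hLΔx : LΔ (1, 0) =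
      (ψ p * dx ψ p + ψ p * dx ψ p) - (dx u p * dx ψ p + ψ p * dx (dx u) p) -
        dx (dy u) p := by
    simp [hLΔ, hψx, huxx, huyx]
  -- values at p
  have hDval : Δf p = ψ p ^ 2 - dx u p * ψ p - (dy u p + p.2) := hΔeq p
  have hDne : Δf p ≠ 0 := by rw [hDval]; exact hΔ p hp
  have hxp : dx ψ p = -1 / Δf p := by rw [hDval]; exact hx p hp
  have hyp : dy ψ p = (dx u p - ψ p) / Δf p := by rw [hDval]; exact hy p hp
  -- put everything together
  rw [hLΔy, hxp, hyp, humix, hmix] at E1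
  rw [hLΔx, hxp, hyp, huxx, hψx, hxp] at E2
  have E3 : (-1 / Δf p *
        (ψ p * ((dx u p - ψ p) / Δf p) + ψ p * ((dx u p - ψ p) / Δf p) -
            (dx u p * ((dx u p - ψ p) / Δf p) + ψ p * dx (dy u) p) -
          (dy (dy u) p + 1)) +
      Δf p * L2 (1, 0)) -
      ((dx u p - ψ p) / Δf p *
          (ψ p * (-1 / Δf p) + ψ p * (-1 / Δf p) -
            (dx u p * (-1 / Δf p) + ψ p * dx (dx u) p) - dx (dy u) p) +
        Δf p * L2 (1, 0) -
      (dx (dx u) p - -1 / Δf p)) = 0 - 0 := by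
    rw [E1, E2]
  field_simp [hDne] at E3
  have E5 : Δf p ^ 6 * (dy (dy u) p + 2 + dx u p * dx (dy u) p +
      dx u p * ψ p * dx (dx u) p - ψ p ^ 2 * dx (dx u) p + Δf p * dx (dx u) p) = 0 := by
    linear_combination Δf p ^ 5 * E3
  have E6 : dy (dy u) p + 2 + dx u p * dx (dy u) p +
      dx u p * ψ p * dx (dx u) p - ψ p ^ 2 * dx (dx u) p + Δf p * dx (dx u) p = 0 :=
    (mul_eq_zero.mp E5).resolve_left (pow_ne_zero _ hDne)
  linear_combination E6 - dx (dx u) p * hDval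
end
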